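/- Any solution (p_N^{m+1}, n_N^{m+1}, ψ_N^{m+1}) of Step 1 of the decoupled scheme conserves the discrete masses: ⟨p_N^{m+1}, 1⟩ = ⟨p_N^m, 1⟩ and ⟨n_N^{m+1}, 1⟩ = ⟨n_N^m, 1⟩. -/

import Mathlib

open MeasureTheory Real Set

noncomputable section

abbrev Vec2 := ℝ × ℝ

/-- The spatial domain `Ω = (0,2π)²`. -/
def Om : Set Vec2 := Set.Ioo (0:ℝ) (2*π) ×ˢ Set.Ioo (0:ℝ) (2*π)

/-- Partial derivative in the first space variable. -/
def pdx (f : Vec2 → ℝ) : Vec2 → ℝ := fun z => fderiv ℝ f z (1, 0)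

/-- Partial derivative in the second space variable. -/
def pdy (f : Vec2 → ℝ) : Vec2 → ℝ := fun z => fderiv ℝ f z (0, 1)

/-- Spatial gradient. -/
def grad (f : Vec2 → ℝ) (z : Vec2) : Vec2 := (pdx f z, pdy f z)

/-- Euclidean dot product on ℝ². -/
def dotp (a b : Vec2) : ℝ := a.1 * b.1 + a.2 * b.2

/-- Divergence of a vector field. -/
def div2 (v : Vec2 → Vec2) (z : Vec2) : ℝ :=
  pdx (fun w => (v w).1) z + pdy (fun w => (v w).2) z

/-- Laplacian. -/
def lap (f : Vec2 → ℝ) (z : Vec2) : ℝ := div2 (fun w => grad f w) z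

/-- `|∇f|²`. -/
def gradNormSq (f : Vec2 → ℝ) (z : Vec2) : ℝ := (pdx f z)^2 + (pdy f z)^2

/-- `|∇v|²` for a vector field. -/
def vGradNormSq (v : Vec2 → Vec2) (z : Vec2) : ℝ :=
  gradNormSq (fun w => (v w).1) z + gradNormSq (fun w => (v w).2) z

/-- Componentwise Laplacian of a vector field. -/
def lapV (v : Vec2 → Vec2) (z : Vec2) : Vec2 :=
  (lap (fun w => (v w).1) z, lap (fun w => (v w).2) z)

/-- Convective derivative `(u·∇)v`. -/
def convV (u v : Vec2 → Vec2) (z : Vec2) : Vec2 :=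
  (dotp (u z) (grad (fun w => (v w).1) z), dotp (u z) (grad (fun w => (v w).2) z))

/-- `2π`-periodicity in both space variables. -/
def Periodic2 (f : Vec2 → ℝ) : Prop :=
  (∀ x y : ℝ, f (x + 2*π, y) = f (x, y)) ∧ (∀ x y : ℝ, f (x, y + 2*π) = f (x, y))

def Periodic2V (v : Vec2 → Vec2) : Prop :=
  Periodic2 (fun z => (v z).1) ∧ Periodic2 (fun z => (v z).2)

/-- Time derivative. -/
def tderiv (p : ℝ → Vec2 → ℝ) (t : ℝ) (z : Vec2) : ℝ := deriv (fun s => p s z) t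

def tderivV (u : ℝ → Vec2 → Vec2) (t : ℝ) (z : Vec2) : Vec2 :=
  (tderiv (fun s w => (u s w).1) t z, tderiv (fun s w => (u s w).2) t z)

/-! ### Discrete (spectral) objects -/

/-- The Fourier index box `[-N/2, N/2-1]²`. -/
def trigIdx (N : ℕ) : Finset (ℤ × ℤ) :=
  Finset.Icc (-(N:ℤ)/2) ((N:ℤ)/2 - 1) ×ˢ Finset.Icc (-(N:ℤ)/2) ((N:ℤ)/2 - 1)

/-- Membership in the space `X_N` of real valued trigonometric polynomials
`span{e^{i(jx+ky)} : -N/2 ≤ j,k ≤ N/2-1}`. -/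
def InXN (N : ℕ) (f : Vec2 → ℝ) : Prop :=
  ∃ c : ℤ × ℤ → ℂ, ∀ z : Vec2,
    (f z : ℂ) = ∑ jk ∈ trigIdx N,
      c jk * Complex.exp (Complex.I * ((jk.1 : ℂ) * (z.1 : ℂ) + (jk.2 : ℂ) * (z.2 : ℂ)))

def InXN2 (N : ℕ) (v : Vec2 → Vec2) : Prop :=
  InXN N (fun z => (v z).1) ∧ InXN N (fun z => (v z).2)

/-- The Fourier collocation points `Σ_N`. -/
def colloc (N : ℕ) : Set Vec2 :=
  {z | ∃ i j : ℕ, i < N ∧ j < N ∧ z = (2*π*i/N, 2*π*j/N)}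

/-- `L²(Ω)` inner product. -/
def ip (f g : Vec2 → ℝ) : ℝ := ∫ z in Om, f z * g z

def ipV (u v : Vec2 → Vec2) : ℝ := ∫ z in Om, dotp (u z) (v z)

/-- `L²(Ω)` norm. -/
def nrm (f : Vec2 → ℝ) : ℝ := Real.sqrt (ip f f)

def nrmV (u : Vec2 → Vec2) : ℝ := Real.sqrt (ipV u u)

def gradNrmSqInt (f : Vec2 → ℝ) : ℝ := ∫ z in Om, gradNormSq f z

def vGradNrmSqInt (v : Vec2 → Vec2) : ℝ := ∫ z in Om, vGradNormSq v z

/-- `H¹(Ω)` norm. -/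
def h1nrm (f : Vec2 → ℝ) : ℝ := Real.sqrt (ip f f + gradNrmSqInt f)

def h1nrmV (v : Vec2 → Vec2) : ℝ := Real.sqrt (ipV v v + vGradNrmSqInt v)

/-- The `L²`-orthogonal projection `Π_N` onto `X_N` (defined via choice). -/
def projN (N : ℕ) (f : Vec2 → ℝ) : Vec2 → ℝ :=
  open Classical in
  if h : ∃ g, InXN N g ∧ ∀ v, InXN N v → (∫ z in Om, (f z - g z) * v z) = 0
  then h.choose else fun _ => 0

def projN2 (N : ℕ) (v : Vec2 → Vec2) : Vec2 → Vec2 :=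
  fun z => (projN N (fun w => (v w).1) z, projN N (fun w => (v w).2) z)

/-! ### The decoupled scheme -/

/-- Step 1 of the decoupled scheme (the PNP part). -/
def Step1 (N : ℕ) (dt : ℝ) (pm nm : Vec2 → ℝ) (um : Vec2 → Vec2)
    (p1 n1 ψ1 : Vec2 → ℝ) : Prop :=
  InXN N p1 ∧ InXN N n1 ∧ InXN N ψ1 ∧ (∫ z in Om, ψ1 z) = 0 ∧
  (∀ v, InXN N v →
    (∫ z in Om, ((p1 z - pm z)/dt) * v z)
      - (∫ z in Om, dotp (pm z • um z) (grad v z))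
      + (∫ z in Om, (pm z * (1 + 2*dt*pm z)) *
          dotp (grad (fun w => Real.log (p1 w) + ψ1 w) z) (grad v z)) = 0) ∧
  (∀ v, InXN N v →
    (∫ z in Om, ((n1 z - nm z)/dt) * v z)
      - (∫ z in Om, dotp (nm z • um z) (grad v z))
      + (∫ z in Om, (nm z * (1 + 2*dt*nm z)) *
          dotp (grad (fun w => Real.log (n1 w) - ψ1 w) z) (grad v z)) = 0) ∧
  (∀ v, InXN N v →
    (∫ z in Om, dotp (grad ψ1 z) (grad v z)) = ∫ z in Om, (p1 z - n1 z) * v z)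

/-- Step 2 of the decoupled scheme (velocity prediction). -/
def Step2 (N : ℕ) (dt : ℝ) (pm nm φm : Vec2 → ℝ) (um : Vec2 → Vec2)
    (p1 n1 ψ1 : Vec2 → ℝ) (ut : Vec2 → Vec2) : Prop :=
  InXN2 N ut ∧
  ∀ w, InXN2 N w →
    (∫ z in Om, dotp ((1/dt) • (ut z - um z)) (w z))
    + (∫ z in Om, dotp (convV um ut z) (w z))
    + (∫ z in Om, (dotp (grad (fun y => (ut y).1) z) (grad (fun y => (w y).1) z)
        + dotp (grad (fun y => (ut y).2) z) (grad (fun y => (w y).2) z)))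
    + (∫ z in Om, dotp (grad φm z) (w z))
    + (∫ z in Om, dotp (pm z • grad (fun y => Real.log (p1 y) + ψ1 y) z
        + nm z • grad (fun y => Real.log (n1 y) - ψ1 y) z) (w z)) = 0

/-- Step 3 of the decoupled scheme (pressure correction / projection). -/
def Step3 (N : ℕ) (dt : ℝ) (φm : Vec2 → ℝ) (ut : Vec2 → Vec2)
    (u1 : Vec2 → Vec2) (φ1 : Vec2 → ℝ) : Prop :=
  InXN2 N u1 ∧ InXN N φ1 ∧ (∫ z in Om, φ1 z) = 0 ∧
  (∀ w, InXN2 N w →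
    (∫ z in Om, dotp ((1/dt) • (u1 z - ut z)) (w z))
    + (∫ z in Om, dotp (grad (fun y => φ1 y - φm y) z) (w z)) = 0) ∧
  (∀ q, InXN N q → (∫ z in Om, dotp (u1 z) (grad q z)) = 0)

/-- Admissibility of the data for one step of the scheme. -/
def SchemeData (N : ℕ) (pm nm φm : Vec2 → ℝ) (um : Vec2 → Vec2) : Prop :=
  InXN N pm ∧ InXN N nm ∧ InXN N φm ∧ InXN2 N um ∧
  (∫ z in Om, (pm z - nm z)) = 0 ∧ (∀ z, div2 um z = 0)


lemma one_mem_XN (N : ℕ) (hN : Even N) (hN2 : 0 < N) : InXN N (fun _ => 1) := by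
  refine ⟨fun jk => if jk = (0,0) then 1 else 0, fun z => ?_⟩
  have hmem : ((0:ℤ),(0:ℤ)) ∈ trigIdx N := by
    simp only [trigIdx, Finset.mem_product, Finset.mem_Icc]
    obtain ⟨k, hk⟩ := hN
    have : 1 ≤ k := by omega
    constructor <;> constructor <;> omega
  rw [Finset.sum_eq_single_of_mem ((0:ℤ),(0:ℤ)) hmem]
  · simp
  · intro b _ hb
    have hb0 : b ≠ 0 := hb
    simp [hb0, hb]

lemma continuous_of_InXN {N : ℕ} {f : Vec2 → ℝ} (hf : InXN N f) : Continuous f := by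
  obtain ⟨c, hc⟩ := hf
  have hg : Continuous (fun z : Vec2 => ∑ jk ∈ trigIdx N,
      c jk * Complex.exp (Complex.I * ((jk.1 : ℂ) * (z.1 : ℂ) + (jk.2 : ℂ) * (z.2 : ℂ)))) := by
    apply continuous_finset_sum
    intro jk _
    exact continuous_const.mul (Complex.continuous_exp.comp (continuous_const.mul
      (((continuous_const.mul (Complex.continuous_ofReal.comp continuous_fst)).add
        (continuous_const.mul (Complex.continuous_ofReal.comp continuous_snd))))))
  have : f = fun z => (∑ jk ∈ trigIdx N,
      c jk * Complex.exp (Complex.I * ((jk.1 : ℂ) * (z.1 : ℂ) + (jk.2 : ℂ) * (z.2 : ℂ)))).re := by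
    funext z
    rw [← hc z]
    simp
  rw [this]
  exact Complex.continuous_re.comp hg

lemma integrableOn_of_InXN {N : ℕ} {f : Vec2 → ℝ} (hf : InXN N f) :
    IntegrableOn f Om := by
  have hc := continuous_of_InXN hf
  have hcompact : IsCompact (Set.Icc (0:ℝ) (2*π) ×ˢ Set.Icc (0:ℝ) (2*π)) :=
    isCompact_Icc.prod isCompact_Icc
  have hsub : Om ⊆ Set.Icc (0:ℝ) (2*π) ×ˢ Set.Icc (0:ℝ) (2*π) :=
    Set.prod_mono Set.Ioo_subset_Icc_self Set.Ioo_subset_Icc_self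
  exact (hc.continuousOn.integrableOn_compact hcompact).mono_set hsub

lemma grad_const_one : ∀ z : Vec2, grad (fun _ => (1:ℝ)) z = (0, 0) := by
  intro z
  simp [grad, pdx, pdy, fderiv_const]

/-- discrete mass conservation: any solution
`(p_N^{m+1}, n_N^{m+1}, ψ_N^{m+1})` of Step 1 of the decoupled scheme conserves the discrete
masses: `⟨p_N^{m+1}, 1⟩ = ⟨p_N^m, 1⟩` and `⟨n_N^{m+1}, 1⟩ = ⟨n_N^m, 1⟩`. -/
theorem discrete_mass_conservation
    (N : ℕ) (hN : Even N) (hN2 : 0 < N) (dt : ℝ) (hdt : 0 < dt)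
    (pm nm φm : Vec2 → ℝ) (um : Vec2 → Vec2)
    (hdata : SchemeData N pm nm φm um)
    (hpm : ∀ z, 0 < pm z) (hnm : ∀ z, 0 < nm z)
    (p1 n1 ψ1 : Vec2 → ℝ)
    (hstep1 : Step1 N dt pm nm um p1 n1 ψ1) :
    ip p1 (fun _ => 1) = ip pm (fun _ => 1) ∧
    ip n1 (fun _ => 1) = ip nm (fun _ => 1) := by
  obtain ⟨hp1X, hn1X, hψX, _, hpeq, hneq, _⟩ := hstep1
  have h1X : InXN N (fun _ => (1:ℝ)) := one_mem_XN N hN hN2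
  have hg1 : ∀ z : Vec2, grad (fun _ => (1:ℝ)) z = (0, 0) := grad_const_one
  have key : ∀ (a b : Vec2 → ℝ), InXN N a → InXN N b →
      (∫ z in Om, ((a z - b z)/dt) * (fun _ => (1:ℝ)) z) = 0 →
      ip a (fun _ => 1) = ip b (fun _ => 1) := by
    intro a b haX hbX h
    have ha := integrableOn_of_InXN haX
    have hb := integrableOn_of_InXN hbX
    simp only [mul_one] at h
    have h2 : (∫ z in Om, (a z - b z)/dt) = (∫ z in Om, (a z - b z))/dt :=
      integral_div dt _
    rw [h2] at h
    have h3 : (∫ z in Om, (a z - b z)) = 0 := by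
      field_simp at h
      simpa using h
    rw [integral_sub ha hb] at h3
    simp only [ip, mul_one]
    linarith
  constructor
  · apply key p1 pm hp1X (hdata.1)
    have := hpeq (fun _ => 1) h1X
    simpa [hg1, dotp] using this
  · apply key n1 nm hn1X (hdata.2.1)
    have := hneq (fun _ => 1) h1X
    simpa [hg1, dotp] using this

end
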